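/- Let g : ℝ^p → ℝ be differentiable with Hölder continuous gradient of exponent v ∈ [0,1] and constant M_v ≥ 0. Let ε > 0 and let M > (1/ε)^{(1−v)/(1+v)}·M_v^{2/(1+v)}. Then for all x, y ∈ ℝ^p, g(y) ≤ g(x) + ⟨∇g(x), y − x⟩ + (M/2)‖y − x‖² + ε/2. -/

import Mathlib

open scoped InnerProductSpace

open Real MeasureTheory intervalIntegral in
private lemma key_scalar (v Mv ε M : ℝ) (hv0 : 0 ≤ v) (hv1 : v ≤ 1) (hMv : 0 ≤ Mv)
    (hε : 0 < ε) (hM : M > (1 / ε) ^ ((1 - v) / (1 + v)) * Mv ^ (2 / (1 + v)))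
    (r : ℝ) (hr : 0 ≤ r) :
    Mv / (1 + v) * r ^ ((1:ℝ) + v) ≤ M / 2 * r ^ 2 + ε / 2 := by
  have h1v : (0:ℝ) < 1 + v := by linarith
  have hM0 : 0 < M := lt_of_le_of_lt (by positivity) hM
  rcases eq_or_lt_of_le hv1 with h1 | h1
  · subst h1
    have e1 : ((1:ℝ) - 1) / (1 + 1) = 0 := by norm_num
    have e2 : (2:ℝ) / (1 + 1) = 1 := by norm_num
    rw [e1, e2, Real.rpow_zero, Real.rpow_one, one_mul] at hM
    have e3 : r ^ ((1:ℝ) + 1) = r ^ 2 := by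
      rw [show ((1:ℝ) + 1) = ((2:ℕ):ℝ) by norm_num, Real.rpow_natCast]
    rw [e3]
    nlinarith [sq_nonneg r, mul_nonneg (mul_nonneg hMv hr) hr]
  · have h1v' : (0:ℝ) < 1 - v := by linarith
    set p : ℝ := 2 / (1 + v) with hp
    set q : ℝ := 2 / (1 - v) with hq
    have hpq : p.HolderConjugate q := by
      rw [Real.holderConjugate_iff]
      constructor
      · rw [hp]; rw [lt_div_iff₀ h1v]; linarith
      · rw [hp, hq, inv_div, inv_div]; ring
    set b : ℝ := (1 + v) / (1 - v) with hbdef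
    have hb : 0 < b := by positivity
    -- step 1 : Mv ^ q ≤ ε * M ^ b
    have h2 : ((1 / ε) ^ ((1 - v) / (1 + v)) * Mv ^ (2 / (1 + v))) ^ b ≤ M ^ b :=
      Real.rpow_le_rpow (by positivity) hM.le hb.le
    rw [Real.mul_rpow (by positivity) (by positivity), ← Real.rpow_mul (by positivity),
      ← Real.rpow_mul hMv] at h2
    have e4 : (1 - v) / (1 + v) * b = 1 := by rw [hbdef]; field_simp
    have e5 : 2 / (1 + v) * b = q := by rw [hbdef, hq]; field_simp
    rw [e4, e5, Real.rpow_one] at h2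
    have hMb : 0 < M ^ b := Real.rpow_pos_of_pos hM0 b
    have step1 : Mv ^ q * (M ^ b)⁻¹ ≤ ε := by
      rw [← div_eq_mul_inv, div_le_iff₀ hMb]
      calc Mv ^ q ≤ 1 / ε * Mv ^ q * ε := by field_simp; exact le_rfl
        _ ≤ M ^ b * ε := by
            apply mul_le_mul_of_nonneg_right h2 hε.le
        _ = ε * M ^ b := by ring
    -- step 2 : Young
    set s : ℝ := (1 + v) / 2 with hs
    have hMs : 0 < M ^ s := Real.rpow_pos_of_pos hM0 s
    have young := Real.young_inequality_of_nonneg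
      (a := M ^ s * r ^ ((1:ℝ) + v)) (b := Mv * (M ^ s)⁻¹)
      (by positivity) (by positivity) hpq
    have eAB : M ^ s * r ^ ((1:ℝ) + v) * (Mv * (M ^ s)⁻¹) = Mv * r ^ ((1:ℝ) + v) := by
      field_simp
    have eA : (M ^ s * r ^ ((1:ℝ) + v)) ^ p = M * r ^ 2 := by
      rw [Real.mul_rpow hMs.le (by positivity), ← Real.rpow_mul hM0.le,
        ← Real.rpow_mul hr]
      have : s * p = 1 := by rw [hs, hp]; field_simp
      have h2' : (1 + v) * p = 2 := by rw [hp]; field_simp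
      rw [this, h2', Real.rpow_one, show ((2:ℝ) = ((2:ℕ):ℝ)) by norm_num,
        Real.rpow_natCast]
    have eB : (Mv * (M ^ s)⁻¹) ^ q = Mv ^ q * (M ^ b)⁻¹ := by
      rw [Real.mul_rpow hMv (by positivity), ← Real.rpow_neg_one (M ^ s),
        ← Real.rpow_mul hM0.le, ← Real.rpow_mul hM0.le]
      have h7 : s * -1 * q = -b := by rw [hs, hq, hbdef]; field_simp
      rw [h7, Real.rpow_neg hM0.le]
    rw [eAB, eA, eB] at young
    have hpinv : (1:ℝ) / p = s := by rw [hp, hs]; field_simp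
    have hqinv : (1:ℝ) / q = (1 - v) / 2 := by rw [hq]; field_simp
    -- combine
    have young' : Mv * r ^ ((1:ℝ) + v) ≤ (1 + v) / 2 * (M * r ^ 2) + (1 - v) / 2 * ε := by
      calc Mv * r ^ ((1:ℝ) + v) ≤ M * r ^ 2 / p + Mv ^ q * (M ^ b)⁻¹ / q := young
        _ = (1 + v) / 2 * (M * r ^ 2) + (1 - v) / 2 * (Mv ^ q * (M ^ b)⁻¹) := by
            rw [hp, hq]; field_simp
        _ ≤ (1 + v) / 2 * (M * r ^ 2) + (1 - v) / 2 * ε := by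
            have := mul_le_mul_of_nonneg_left step1 (by linarith : (0:ℝ) ≤ (1 - v) / 2)
            linarith
    rw [div_mul_eq_mul_div, div_le_iff₀ h1v]
    have hr2 : 0 ≤ M * r ^ 2 := by positivity
    nlinarith [mul_nonneg hv0 hε.le, mul_nonneg hv0 hr2]

/-- If `g` is differentiable with Hölder continuous gradient of exponent `v ∈ [0,1]`
and constant `M_v ≥ 0`, `ε > 0` and `M > (1/ε)^{(1−v)/(1+v)}·M_v^{2/(1+v)}`, then for
all `x, y`, `g(y) ≤ g(x) + ⟨∇g(x), y − x⟩ + (M/2)‖y − x‖² + ε/2`. -/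
theorem statement2 {p : ℕ} (v Mv ε M : ℝ) (hv0 : 0 ≤ v) (hv1 : v ≤ 1) (hMv : 0 ≤ Mv)
    (hε : 0 < ε) (hM : M > (1 / ε) ^ ((1 - v) / (1 + v)) * Mv ^ (2 / (1 + v)))
    (g : EuclideanSpace ℝ (Fin p) → ℝ) (hg : Differentiable ℝ g)
    (hHolder : ∀ x y : EuclideanSpace ℝ (Fin p),
      ‖gradient g x - gradient g y‖ ≤ Mv * ‖x - y‖ ^ v) :
    ∀ x y : EuclideanSpace ℝ (Fin p),
      g y ≤ g x + ⟪gradient g x, y - x⟫_ℝ + M / 2 * ‖y - x‖ ^ 2 + ε / 2 := by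
  intro x y
  rcases eq_or_ne y x with rfl | hxy
  · simp only [sub_self, inner_zero_right, norm_zero]
    nlinarith [hε]
  set c : EuclideanSpace ℝ (Fin p) := y - x with hc
  have hc0 : 0 < ‖c‖ := by rw [norm_pos_iff, hc, sub_ne_zero]; exact hxy
  set f : ℝ → ℝ := fun t => ⟪gradient g (x + t • c), c⟫_ℝ with hf
  have hline : ∀ t : ℝ, HasDerivAt (fun s : ℝ => x + s • c) c t := fun t => by
    simpa using ((hasDerivAt_id t).smul_const c).const_add x
  have hφ : ∀ t : ℝ, HasDerivAt (fun s : ℝ => g (x + s • c)) (f t) t := by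
    intro t
    have h1 := ((hg (x + t • c)).hasGradientAt.hasFDerivAt).comp_hasDerivAt t (hline t)
    simpa [hf, InnerProductSpace.toDual_apply_apply, Function.comp_def] using h1
  -- integrability of f on [0,1]
  have hmeas : Measurable f := by
    have : f = fun t => fderiv ℝ g (x + t • c) c := by
      funext t
      simp only [hf, gradient, InnerProductSpace.toDual_symm_apply]
    rw [this]
    exact (measurable_fderiv_apply_const ℝ g c).comp
      ((continuous_const.add (continuous_id.smul continuous_const)).measurable)
  have hbound : ∀ t ∈ Set.Icc (0:ℝ) 1, ‖f t‖ ≤ (‖gradient g x‖ + Mv * ‖c‖ ^ v) * ‖c‖ := by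
    intro t ht
    have h1 : ‖f t‖ ≤ ‖gradient g (x + t • c)‖ * ‖c‖ := by
      rw [hf]; exact abs_real_inner_le_norm _ _
    have h2 : ‖gradient g (x + t • c)‖ ≤ ‖gradient g x‖ + Mv * ‖c‖ ^ v := by
      have h3 := hHolder (x + t • c) x
      have h4 : (x + t • c) - x = t • c := by abel
      rw [h4] at h3
      have h5 : ‖t • c‖ ^ v ≤ ‖c‖ ^ v := by
        apply Real.rpow_le_rpow (norm_nonneg _) _ hv0
        rw [norm_smul]
        calc ‖t‖ * ‖c‖ ≤ 1 * ‖c‖ := by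
              apply mul_le_mul_of_nonneg_right _ (norm_nonneg c)
              rw [Real.norm_eq_abs, abs_le]; constructor <;> linarith [ht.1, ht.2]
          _ = ‖c‖ := one_mul _
      have h6 : ‖gradient g (x + t • c)‖ - ‖gradient g x‖ ≤ Mv * ‖c‖ ^ v := by
        calc ‖gradient g (x + t • c)‖ - ‖gradient g x‖
            ≤ ‖gradient g (x + t • c) - gradient g x‖ := norm_sub_norm_le _ _
          _ ≤ Mv * ‖t • c‖ ^ v := h3
          _ ≤ Mv * ‖c‖ ^ v := mul_le_mul_of_nonneg_left h5 hMv
      linarith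
    calc ‖f t‖ ≤ ‖gradient g (x + t • c)‖ * ‖c‖ := h1
      _ ≤ (‖gradient g x‖ + Mv * ‖c‖ ^ v) * ‖c‖ :=
          mul_le_mul_of_nonneg_right h2 (norm_nonneg c)
  have hint : IntervalIntegrable f MeasureTheory.volume 0 1 := by
    rw [intervalIntegrable_iff, Set.uIoc_of_le zero_le_one]
    haveI : MeasureTheory.IsFiniteMeasure (MeasureTheory.volume.restrict (Set.Ioc (0:ℝ) 1)) :=
      ⟨by rw [MeasureTheory.Measure.restrict_apply_univ]; simp⟩
    apply MeasureTheory.Integrable.mono'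
      (MeasureTheory.integrable_const ((‖gradient g x‖ + Mv * ‖c‖ ^ v) * ‖c‖))
      (hmeas.aestronglyMeasurable.restrict)
    · filter_upwards [MeasureTheory.ae_restrict_mem measurableSet_Ioc] with t ht
      exact hbound t ⟨ht.1.le, ht.2⟩
  -- FTC
  have hFTC : ∫ t in (0:ℝ)..1, f t = g y - g x := by
    have := intervalIntegral.integral_eq_sub_of_hasDerivAt
      (f := fun s : ℝ => g (x + s • c)) (f' := f) (fun t _ => hφ t) hint
    rw [this]
    norm_num [hc]
  -- pointwise bound on f t
  have hptwise : ∀ t ∈ Set.Icc (0:ℝ) 1,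
      f t ≤ f 0 + Mv * ‖c‖ ^ ((1:ℝ) + v) * t ^ v := by
    intro t ht
    have h4 : (x + t • c) - (x + (0:ℝ) • c) = t • c := by
      rw [zero_smul, add_zero]; abel
    have h3 := hHolder (x + t • c) (x + (0:ℝ) • c)
    rw [h4] at h3
    have h5 : f t - f 0 ≤ Mv * ‖t • c‖ ^ v * ‖c‖ := by
      rw [hf]
      calc ⟪gradient g (x + t • c), c⟫_ℝ - ⟪gradient g (x + (0:ℝ) • c), c⟫_ℝ
          = ⟪gradient g (x + t • c) - gradient g (x + (0:ℝ) • c), c⟫_ℝ := by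
            rw [inner_sub_left]
        _ ≤ ‖gradient g (x + t • c) - gradient g (x + (0:ℝ) • c)‖ * ‖c‖ :=
            real_inner_le_norm _ _
        _ ≤ Mv * ‖t • c‖ ^ v * ‖c‖ := mul_le_mul_of_nonneg_right h3 (norm_nonneg c)
    have h6 : Mv * ‖t • c‖ ^ v * ‖c‖ = Mv * ‖c‖ ^ ((1:ℝ) + v) * t ^ v := by
      rw [norm_smul, Real.norm_eq_abs, abs_of_nonneg ht.1,
        Real.mul_rpow ht.1 (norm_nonneg c), Real.rpow_add hc0, Real.rpow_one]
      ring
    linarith [h5, h6.le, h6.ge]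
  -- integrate the bound
  have hint2 : IntervalIntegrable (fun t : ℝ => f 0 + Mv * ‖c‖ ^ ((1:ℝ) + v) * t ^ v)
      MeasureTheory.volume 0 1 :=
    (intervalIntegrable_const).add
      ((intervalIntegral.intervalIntegrable_rpow (Or.inl hv0)).const_mul _)
  have hmono : ∫ t in (0:ℝ)..1, f t ≤
      ∫ t in (0:ℝ)..1, (f 0 + Mv * ‖c‖ ^ ((1:ℝ) + v) * t ^ v) :=
    intervalIntegral.integral_mono_on zero_le_one hint hint2 hptwise
  have hval : ∫ t in (0:ℝ)..1, (f 0 + Mv * ‖c‖ ^ ((1:ℝ) + v) * t ^ v)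
      = f 0 + Mv * ‖c‖ ^ ((1:ℝ) + v) / (v + 1) := by
    rw [intervalIntegral.integral_add intervalIntegrable_const
      ((intervalIntegral.intervalIntegrable_rpow (Or.inl hv0)).const_mul _),
      intervalIntegral.integral_const, intervalIntegral.integral_const_mul,
      integral_rpow (Or.inl (by linarith : (-1:ℝ) < v))]
    rw [Real.one_rpow, Real.zero_rpow (by linarith : v + 1 ≠ 0)]
    simp
    ring
  have hf0 : f 0 = ⟪gradient g x, c⟫_ℝ := by
    rw [hf]; norm_num
  have hdescent : g y ≤ g x + ⟪gradient g x, c⟫_ℝ + Mv / (1 + v) * ‖c‖ ^ ((1:ℝ) + v) := by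
    have := hmono
    rw [hFTC, hval, hf0] at this
    have e : Mv * ‖c‖ ^ ((1:ℝ) + v) / (v + 1) = Mv / (1 + v) * ‖c‖ ^ ((1:ℝ) + v) := by
      ring
    linarith [e.le, e.ge]
  have hkey := key_scalar v Mv ε M hv0 hv1 hMv hε hM ‖c‖ (norm_nonneg c)
  linarith
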